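/- Let d_1, d_2 > 0 and b_1, b_2, L_{111}, L_{112}, L_{122}, L_{222} ∈ ℝ. Then the set of solutions (x_1, x_2) ∈ (ℂ*)^2 to the system r_1(x) = 1 and r_2(x) = 1, where r_1(x) = b_1/(2x_1) - (1/(4d_1))(L_{111}/x_1 + 2L_{112}x_2/x_1² + 2L_{122}/x_1 - L_{122}x_1/x_2²) and r_2(x) = b_2/(2x_2) - (1/(4d_2))(L_{222}/x_2 + 2L_{122}x_1/x_2² + 2L_{112}/x_2 - L_{112}x_2/x_1²), is finite. -/

import Mathlib

set_option maxHeartbeats 1000000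

/-- The `ℓ = 2` homogeneous Einstein system with `λ = 1` has finitely many
solutions in `(ℂ*)²`. -/
theorem two_summand_finiteness (d₁ d₂ b₁ b₂ L111 L112 L122 L222 : ℝ)
    (hd₁ : 0 < d₁) (hd₂ : 0 < d₂) :
    Set.Finite {p : ℂ × ℂ | p.1 ≠ 0 ∧ p.2 ≠ 0 ∧
      (b₁ : ℂ) / (2 * p.1) -
          (1 / (4 * (d₁ : ℂ))) * ((L111 : ℂ) / p.1 + 2 * (L112 : ℂ) * p.2 / p.1 ^ 2 +
            2 * (L122 : ℂ) / p.1 - (L122 : ℂ) * p.1 / p.2 ^ 2) = 1 ∧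
      (b₂ : ℂ) / (2 * p.2) -
          (1 / (4 * (d₂ : ℂ))) * ((L222 : ℂ) / p.2 + 2 * (L122 : ℂ) * p.1 / p.2 ^ 2 +
            2 * (L112 : ℂ) / p.2 - (L112 : ℂ) * p.2 / p.1 ^ 2) = 1} := by
  have hD₁ : (d₁ : ℂ) ≠ 0 := by exact_mod_cast hd₁.ne'
  have hD₂ : (d₂ : ℂ) ≠ 0 := by exact_mod_cast hd₂.ne'
  by_cases hdeg : L112 = 0 ∧ L122 = 0 ∧ L111 = 2 * d₁ * b₁
  · obtain ⟨hB, hC, hA⟩ := hdeg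
    subst hB hC hA
    convert Set.finite_empty
    ext ⟨x, y⟩
    simp only [Set.mem_setOf_eq, Set.mem_empty_iff_false, iff_false]
    rintro ⟨hx, hy, e1, e2⟩
    push_cast at e1
    field_simp at e1
    have h8 : (d₁:ℂ) * x ^ 2 = 0 := by
      have h9 : (d₁:ℂ) * x ^ 2 * y ^ 2 = 0 := by linear_combination (-1/8 : ℂ) * e1
      exact (mul_eq_zero.1 h9).resolve_right (pow_ne_zero 2 hy)
    rcases mul_eq_zero.1 h8 with h' | h'
    · exact hD₁ h'
    · exact hx (by simpa using pow_eq_zero_iff (n := 2) (by norm_num) |>.1 h')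
  · -- nondegenerate case
    set c3 : ℂ := -((2 * d₂ + d₁) * L112) with hc3
    set c2 : ℂ := 2 * d₁ * d₂ * b₁ - d₂ * L111 - 2 * d₂ * L122 with hc2
    set c1 : ℂ := -(2 * d₁ * d₂ * b₂) + d₁ * L222 + 2 * d₁ * L112 with hc1
    set c0 : ℂ := (d₂ + 2 * d₁) * L122 with hc0
    set P : Polynomial ℂ := Polynomial.C c3 * Polynomial.X ^ 3 + Polynomial.C c2 * Polynomial.X ^ 2
      + Polynomial.C c1 * Polynomial.X + Polynomial.C c0 with hP
    have hcoeff3 : P.coeff 3 = c3 := by simp [hP, Polynomial.coeff_C]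
    have hcoeff2 : P.coeff 2 = c2 := by simp [hP, Polynomial.coeff_C]
    have hcoeff0 : P.coeff 0 = c0 := by simp [hP, Polynomial.coeff_C]
    have hPne : P ≠ 0 := by
      intro h
      push_neg at hdeg
      by_cases hB : L112 = 0
      · by_cases hC : L122 = 0
        · have hA := hdeg hB hC
          have h2 : c2 = 0 := by rw [← hcoeff2, h, Polynomial.coeff_zero]
          rw [hc2] at h2
          have hC' : (L122 : ℂ) = 0 := by exact_mod_cast hC
          rw [hC'] at h2
          have h3 : (d₂ : ℂ) * (2 * d₁ * b₁ - L111) = 0 := by linear_combination h2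
          rcases mul_eq_zero.1 h3 with h' | h'
          · exact hD₂ h'
          · apply hA
            have : (L111 : ℂ) = 2 * d₁ * b₁ := by linear_combination -h'
            exact_mod_cast this
        · have h2 : c0 = 0 := by rw [← hcoeff0, h, Polynomial.coeff_zero]
          rw [hc0] at h2
          rcases mul_eq_zero.1 h2 with h' | h'
          · have h3 : (0:ℝ) < d₂ + 2 * d₁ := by linarith
            have : ((d₂ : ℂ)) + 2 * d₁ ≠ 0 := by exact_mod_cast h3.ne'
            exact this h'
          · exact hC (by exact_mod_cast h')
      · have h2 : c3 = 0 := by rw [← hcoeff3, h, Polynomial.coeff_zero]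
        rw [hc3, neg_eq_zero] at h2
        rcases mul_eq_zero.1 h2 with h' | h'
        · have h3 : (0:ℝ) < 2 * d₂ + d₁ := by linarith
          have : 2 * (d₂ : ℂ) + d₁ ≠ 0 := by exact_mod_cast h3.ne'
          exact this h'
        · exact hB (by exact_mod_cast h')
    have hfin := (Polynomial.finite_setOf_isRoot hPne).image
      (fun t : ℂ => ((b₁ : ℂ) / 2 - (1 / (4 * (d₁:ℂ))) *
          ((L111:ℂ) + 2 * L122 + 2 * L112 * t - L122 / t ^ 2),
        t * ((b₁ : ℂ) / 2 - (1 / (4 * (d₁:ℂ))) *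
          ((L111:ℂ) + 2 * L122 + 2 * L112 * t - L122 / t ^ 2))))
    apply hfin.subset
    rintro ⟨x, y⟩ ⟨hx, hy, e1, e2⟩
    dsimp only at hx hy e1 e2
    have hx3 : x ^ 3 ≠ 0 := pow_ne_zero _ hx
    have hy3 : y ^ 3 ≠ 0 := pow_ne_zero _ hy
    have hDD1 : (4 * (d₁:ℂ) * (x * x ^ 2 * x * y ^ 2)) ≠ 0 :=
      mul_ne_zero (mul_ne_zero (by norm_num) hD₁)
        (mul_ne_zero (mul_ne_zero (mul_ne_zero hx (pow_ne_zero 2 hx)) hx) (pow_ne_zero 2 hy))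
    have hDD2 : (4 * (d₂:ℂ) * (y * y ^ 2 * y * x ^ 2)) ≠ 0 :=
      mul_ne_zero (mul_ne_zero (by norm_num) hD₂)
        (mul_ne_zero (mul_ne_zero (mul_ne_zero hy (pow_ne_zero 2 hy)) hy) (pow_ne_zero 2 hx))
    rw [sub_eq_iff_eq_add] at e1 e2
    field_simp at e1 e2
    have hE1m : (2 * x ^ 3) * (2 * (d₁:ℂ) * b₁ * x * y ^ 2 - L111 * x * y ^ 2 - 2 * L112 * y ^ 3
        - 2 * L122 * x * y ^ 2 + L122 * x ^ 3 - 4 * d₁ * x ^ 2 * y ^ 2) = 0 := by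
      linear_combination x ^ 3 * e1
    have E1 : 2 * (d₁:ℂ) * b₁ * x * y ^ 2 - L111 * x * y ^ 2 - 2 * L112 * y ^ 3
        - 2 * L122 * x * y ^ 2 + L122 * x ^ 3 - 4 * d₁ * x ^ 2 * y ^ 2 = 0 := by
      rcases mul_eq_zero.1 hE1m with h | h
      · exact absurd h (by simpa using hx3)
      · exact h
    have hE2m : (2 * y ^ 3) * (2 * (d₂:ℂ) * b₂ * x ^ 2 * y - L222 * x ^ 2 * y - 2 * L122 * x ^ 3
        - 2 * L112 * x ^ 2 * y + L112 * y ^ 3 - 4 * d₂ * x ^ 2 * y ^ 2) = 0 := by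
      linear_combination y ^ 3 * e2
    have E2 : 2 * (d₂:ℂ) * b₂ * x ^ 2 * y - L222 * x ^ 2 * y - 2 * L122 * x ^ 3
        - 2 * L112 * x ^ 2 * y + L112 * y ^ 3 - 4 * d₂ * x ^ 2 * y ^ 2 = 0 := by
      rcases mul_eq_zero.1 hE2m with h | h
      · exact absurd h (by simpa using hy3)
      · exact h
    have key : c3 * y ^ 3 + c2 * y ^ 2 * x + c1 * y * x ^ 2 + c0 * x ^ 3 = 0 := by
      rw [hc3, hc2, hc1, hc0]
      linear_combination (d₂ : ℂ) * E1 - (d₁ : ℂ) * E2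
    obtain ⟨t, ht⟩ : ∃ t : ℂ, t = y / x := ⟨_, rfl⟩
    have ht0 : t ≠ 0 := by rw [ht]; exact div_ne_zero hy hx
    have hyt : y = t * x := by rw [ht, div_mul_cancel₀ _ hx]
    subst hyt
    have ht2 : t ^ 2 ≠ 0 := pow_ne_zero _ ht0
    have h4 : (4 * (d₁:ℂ) * t ^ 2) ≠ 0 := mul_ne_zero (mul_ne_zero (by norm_num) hD₁) ht2
    have hE' : 2 * (d₁:ℂ) * b₁ * t ^ 2 - L111 * t ^ 2 - 2 * L112 * t ^ 3 - 2 * L122 * t ^ 2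
        + L122 - 4 * d₁ * t ^ 2 * x = 0 := by
      have h5 : (2 * (d₁:ℂ) * b₁ * t ^ 2 - L111 * t ^ 2 - 2 * L112 * t ^ 3 - 2 * L122 * t ^ 2
          + L122 - 4 * d₁ * t ^ 2 * x) * x ^ 3 = 0 := by linear_combination E1
      exact (mul_eq_zero.1 h5).resolve_right hx3
    have hw : (1 / (4 * (d₁:ℂ))) * (4 * (d₁:ℂ)) = 1 := by
      field_simp
    have hct : (L122:ℂ) / t ^ 2 * t ^ 2 = L122 := div_mul_cancel₀ _ ht2
    have hmul : ((b₁:ℂ) / 2 - (1 / (4 * (d₁:ℂ))) *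
        ((L111:ℂ) + 2 * L122 + 2 * L112 * t - L122 / t ^ 2) - x) * (4 * (d₁:ℂ) * t ^ 2) = 0 := by
      linear_combination hE' + ((L122:ℂ) - t ^ 2 * ((L111:ℂ) + 2 * L122 + 2 * L112 * t)) * hw
        + (4 * (d₁:ℂ) * (1 / (4 * (d₁:ℂ)))) * hct
    have hFt : (b₁:ℂ) / 2 - (1 / (4 * (d₁:ℂ))) *
        ((L111:ℂ) + 2 * L122 + 2 * L112 * t - L122 / t ^ 2) = x :=
      sub_eq_zero.1 ((mul_eq_zero.1 hmul).resolve_right h4)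
    refine ⟨t, ?_, ?_⟩
    · show P.IsRoot t
      have h1 : (c3 * t ^ 3 + c2 * t ^ 2 + c1 * t + c0) * x ^ 3 = 0 := by
        linear_combination key
      simp only [Polynomial.IsRoot, hP, Polynomial.eval_add, Polynomial.eval_mul,
        Polynomial.eval_pow, Polynomial.eval_C, Polynomial.eval_X]
      exact (mul_eq_zero.1 h1).resolve_right hx3
    · simp only [Prod.mk.injEq]
      exact ⟨hFt, by rw [hFt]⟩
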